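/- The Inclusion Introduction rule is realizable by extending a team: if a team X over domain V satisfies a⃗ ⊆ b⃗, c is a variable in V, and x is a fresh variable not in V, then there exists a team X' with the same restriction to V as X (obtained by assigning to each s ∈ X a value for x) such that X' satisfies a⃗x ⊆ b⃗c. -/
import Mathlib


/-- A team is a set of assignments; the inclusion atom `x ⊆ y` holds in team `X`
iff for every `s ∈ X` there is `s' ∈ X` with `s(x) = s'(y)` componentwise. -/
def InclAtom {M Var : Type*} {n : ℕ} (X : Set (Var → M)) (x y : Fin n → Var) : Prop :=
  ∀ s ∈ X, ∃ s' ∈ X, ∀ i, s (x i) = s' (y i)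

/-- Inclusion Introduction is realizable: if X over variables V satisfies
a⃗ ⊆ b⃗ and c ∈ V, then extending each assignment of X with a value for a
fresh variable x (modeled by the summand Unit) yields a team X' over
V ⊕ Unit whose restriction to V is X and which satisfies a⃗x ⊆ b⃗c. -/
theorem inclusion_introduction {M V : Type*} {n : ℕ} (X : Set (V → M))
    (a b : Fin n → V) (c : V) (h : InclAtom X a b) :
    ∃ X' : Set ((V ⊕ Unit) → M),
      ((fun t : (V ⊕ Unit) → M => t ∘ Sum.inl) '' X' = X) ∧
      InclAtom X' (Fin.snoc (Sum.inl ∘ a) (Sum.inr ()))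
        (Fin.snoc (Sum.inl ∘ b) (Sum.inl c)) := by
  classical
  -- choose a witness for each s ∈ X
  let w : (V → M) → (V → M) := fun s => if hs : s ∈ X then (h s hs).choose else s
  have hw : ∀ s (hs : s ∈ X), w s ∈ X ∧ ∀ i, s (a i) = w s (b i) := by
    intro s hs
    simp only [w, dif_pos hs]
    exact ⟨(h s hs).choose_spec.1, (h s hs).choose_spec.2⟩
  let ext : (V → M) → ((V ⊕ Unit) → M) := fun s => Sum.elim s (fun _ => w s c)
  refine ⟨ext '' X, ?_, ?_⟩
  · ext s
    constructor
    · rintro ⟨t, ⟨s₀, hs₀, rfl⟩, rfl⟩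
      simpa [ext] using hs₀
    · intro hs
      exact ⟨ext s, ⟨s, hs, rfl⟩, rfl⟩
  · rintro t ⟨s, hs, rfl⟩
    refine ⟨ext (w s), ⟨w s, (hw s hs).1, rfl⟩, ?_⟩
    intro i
    refine Fin.lastCases ?_ ?_ i
    · simp [ext]
    · intro j
      simp only [Fin.snoc_castSucc, Function.comp_apply, ext, Sum.elim_inl]
      exact (hw s hs).2 j
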